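/- For every real number β ≥ 0, the integral of the square root of the population-distance-based density satisfies ∫_{B_n} √(Φ(β, n)·(1 + |x|²)^{−β}) dx = Θ(g(β, n)); explicitly, this integral is Θ(1) if β > 2; Θ(log n) if β = 2; Θ(n^{1−β/2}) if 1 < β < 2; Θ(√(n/log n)) if β = 1; and Θ(√n) if 0 ≤ β < 1. -/

import Mathlib

open MeasureTheory

/-- `f(n) = Θ(h(n))`: there exist constants `0 < c₁ ≤ c₂` and `N₀` such that
`c₁·h(n) ≤ f(n) ≤ c₂·h(n)` for all integers `n ≥ N₀`. -/
def IsBigTheta (f h : ℕ → ℝ) : Prop :=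
  ∃ c₁ c₂ : ℝ, 0 < c₁ ∧ c₁ ≤ c₂ ∧ ∃ N₀ : ℕ, ∀ n : ℕ, N₀ ≤ n →
    c₁ * h n ≤ f n ∧ f n ≤ c₂ * h n

/-- The closed disk `B_n = {x ∈ ℝ² : |x| ≤ √n}`. -/
noncomputable def diskB (n : ℕ) : Set (EuclideanSpace ℝ (Fin 2)) :=
  Metric.closedBall 0 (Real.sqrt n)

/-- Normalization constant `Φ(β, n) = (∫_{B_n} (1 + |x|²)^{−β} dx)⁻¹`. -/
noncomputable def Phi (β : ℝ) (n : ℕ) : ℝ :=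
  (∫ x in diskB n, (1 + ‖x‖ ^ 2) ^ (-β))⁻¹

/-- `g(β, n)`: `1` if `β > 2`; `log n` if `β = 2`; `n^{1−β/2}` if `1 < β < 2`;
`√(n/log n)` if `β = 1`; `√n` if `0 ≤ β < 1`. -/
noncomputable def g (β : ℝ) (n : ℕ) : ℝ :=
  if 2 < β then 1
  else if β = 2 then Real.log n
  else if 1 < β then (n : ℝ) ^ (1 - β / 2)
  else if β = 1 then Real.sqrt ((n : ℝ) / Real.log n)
  else Real.sqrt n

open Real Set Filter

noncomputable def J (α : ℝ) (n : ℕ) : ℝ := ∫ x in diskB n, (1 + ‖x‖ ^ 2) ^ (-α)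

lemma Phi_eq (β : ℝ) (n : ℕ) : Phi β n = (J β n)⁻¹ := rfl

lemma polar (f : ℝ → ℝ) :
    ∫ x : EuclideanSpace ℝ (Fin 2), f ‖x‖ = 2 * π * ∫ y in Ioi (0:ℝ), y * f y := by
  have hv : (volume (Metric.ball (0 : EuclideanSpace ℝ (Fin 2)) 1)).toReal = π := by
    rw [EuclideanSpace.volume_ball]
    norm_num [Real.Gamma_two, Real.sq_sqrt Real.pi_nonneg, ENNReal.toReal_ofReal Real.pi_nonneg]
  rw [MeasureTheory.integral_fun_norm_addHaar volume f, finrank_euclideanSpace_fin, measureReal_def, hv]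
  simp only [smul_eq_mul, nsmul_eq_mul, pow_one, Nat.cast_ofNat]
  rw [← integral_const_mul, mul_assoc, ← integral_const_mul]
  norm_num [← integral_const_mul]

lemma J_eq (α : ℝ) (n : ℕ) :
    J α n = 2 * π * ∫ y in (0:ℝ)..(Real.sqrt n), y * (1 + y ^ 2) ^ (-α) := by
  have h1 : J α n = ∫ x : EuclideanSpace ℝ (Fin 2),
      (fun r : ℝ => if r ≤ Real.sqrt n then (1 + r ^ 2) ^ (-α) else 0) ‖x‖ := by
    rw [J, diskB, ← integral_indicator (measurableSet_closedBall)]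
    congr 1; ext x
    classical
    rw [Set.indicator_apply]
    simp [Metric.mem_closedBall, dist_zero_right]
  rw [h1, polar (fun r : ℝ => if r ≤ Real.sqrt n then (1 + r ^ 2) ^ (-α) else 0)]
  rw [intervalIntegral.integral_of_le (Real.sqrt_nonneg _)]
  congr 1
  rw [← Set.Ioi_inter_Iic, ← setIntegral_indicator measurableSet_Iic]
  congr 1; ext y
  simp only [Set.indicator_apply, Set.mem_Iic]
  split <;> simp

lemma cont_integrand (α : ℝ) : Continuous (fun y : ℝ => y * (1 + y ^ 2) ^ (-α)) := by
  apply continuous_id.mul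
  apply Continuous.rpow_const (by continuity)
  intro y; left; positivity

lemma ftc_ne (α : ℝ) (hα : α ≠ 1) (s : ℝ) :
    ∫ y in (0:ℝ)..s, y * (1 + y ^ 2) ^ (-α) = ((1 + s ^ 2) ^ (1 - α) - 1) / (2 * (1 - α)) := by
  have key : ∀ t : ℝ, HasDerivAt (fun y : ℝ => (1 + y ^ 2) ^ (1 - α) / (2 * (1 - α)))
      (t * (1 + t ^ 2) ^ (-α)) t := by
    intro t
    have h1 : HasDerivAt (fun y : ℝ => 1 + y ^ 2) (2 * t) t := by
      simpa using (hasDerivAt_pow 2 t).const_add 1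
    have hpos : (0:ℝ) < 1 + t ^ 2 := by positivity
    have h2 := h1.rpow_const (p := 1 - α) (Or.inl hpos.ne')
    have h3 := h2.div_const (2 * (1 - α))
    refine h3.congr_deriv ?_
    have : (1:ℝ) - α - 1 = -α := by ring
    rw [this]
    have h1a : (1:ℝ) - α ≠ 0 := fun h => hα (by linarith)
    field_simp
  have := intervalIntegral.integral_eq_sub_of_hasDerivAt (f := fun y : ℝ =>
      (1 + y ^ 2) ^ (1 - α) / (2 * (1 - α))) (fun t _ => key t)
    ((cont_integrand α).intervalIntegrable 0 s)
  rw [this]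
  have h1a : (1:ℝ) - α ≠ 0 := fun h => hα (by linarith)
  field_simp
  simp

lemma ftc_one (s : ℝ) :
    ∫ y in (0:ℝ)..s, y * (1 + y ^ 2) ^ (-(1:ℝ)) = Real.log (1 + s ^ 2) / 2 := by
  have key : ∀ t : ℝ, HasDerivAt (fun y : ℝ => Real.log (1 + y ^ 2) / 2)
      (t * (1 + t ^ 2) ^ (-(1:ℝ))) t := by
    intro t
    have h1 : HasDerivAt (fun y : ℝ => 1 + y ^ 2) (2 * t) t := by
      simpa using (hasDerivAt_pow 2 t).const_add 1
    have hpos : (0:ℝ) < 1 + t ^ 2 := by positivity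
    have h2 := (h1.log hpos.ne').div_const 2
    refine h2.congr_deriv ?_
    rw [Real.rpow_neg_one]
    field_simp
  have := intervalIntegral.integral_eq_sub_of_hasDerivAt (f := fun y : ℝ =>
      Real.log (1 + y ^ 2) / 2) (fun t _ => key t)
    ((cont_integrand 1).intervalIntegrable 0 s)
  rw [this]
  norm_num

lemma J_ne (α : ℝ) (hα : α ≠ 1) (n : ℕ) :
    J α n = π * (((1 + n : ℝ)) ^ (1 - α) - 1) / (1 - α) := by
  have h1a : (1:ℝ) - α ≠ 0 := fun h => hα (by linarith)
  rw [J_eq, ftc_ne α hα, Real.sq_sqrt (Nat.cast_nonneg n)]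
  field_simp

lemma J_one (n : ℕ) : J 1 n = π * Real.log (1 + n) := by
  rw [J_eq, ftc_one, Real.sq_sqrt (Nat.cast_nonneg n)]
  ring

lemma J_pos (α : ℝ) (n : ℕ) (hn : 1 ≤ n) : 0 < J α n := by
  have hn' : (1:ℝ) < 1 + n := by
    have : (1:ℝ) ≤ n := by exact_mod_cast hn
    linarith
  rcases lt_trichotomy α 1 with h | h | h
  · rw [J_ne α h.ne n]
    have : (1:ℝ) < (1 + n : ℝ) ^ (1 - α) := Real.one_lt_rpow_iff_of_pos (by linarith) |>.mpr
      (Or.inl ⟨hn', by linarith⟩)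
    have hd : (0:ℝ) < 1 - α := by linarith
    have hnum : (0:ℝ) < (1 + n : ℝ) ^ (1 - α) - 1 := by linarith
    positivity
  · rw [h, J_one]
    have := Real.log_pos hn'
    positivity
  · rw [J_ne α h.ne' n]
    have h1 : (1 + n : ℝ) ^ (1 - α) < 1 :=
      Real.rpow_lt_one_of_one_lt_of_neg hn' (by linarith)
    have hd : (1:ℝ) - α < 0 := by linarith
    rw [div_pos_iff]
    right
    exact ⟨mul_neg_of_pos_of_neg Real.pi_pos (by linarith), by linarith⟩

lemma J_nonneg (α : ℝ) (n : ℕ) : 0 ≤ J α n :=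
  setIntegral_nonneg (measurableSet_closedBall) (fun x _ => by positivity)

lemma Feq (β : ℝ) (n : ℕ) :
    (∫ x in diskB n, Real.sqrt (Phi β n * (1 + ‖x‖ ^ 2) ^ (-β)))
      = (Real.sqrt (J β n))⁻¹ * J (β / 2) n := by
  have hJ : 0 ≤ J β n := J_nonneg β n
  have hpt : ∀ x : EuclideanSpace ℝ (Fin 2),
      Real.sqrt (Phi β n * (1 + ‖x‖ ^ 2) ^ (-β))
        = (Real.sqrt (J β n))⁻¹ * (1 + ‖x‖ ^ 2) ^ (-(β / 2)) := by
    intro x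
    rw [Phi_eq, Real.sqrt_mul (inv_nonneg.mpr hJ), Real.sqrt_inv]
    congr 1
    have hb : (0:ℝ) ≤ 1 + ‖x‖ ^ 2 := by positivity
    rw [Real.sqrt_eq_rpow, ← Real.rpow_mul hb]
    congr 1
    ring
  simp only [hpt]
  rw [MeasureTheory.integral_const_mul]
  rfl

lemma theta_of_tendsto {f h : ℕ → ℝ} {L : ℝ} (hL : 0 < L)
    (hf : Tendsto (fun n => f n / h n) atTop (nhds L))
    (hh : ∀ᶠ n in atTop, 0 < h n) : IsBigTheta f h := by
  have h1 : ∀ᶠ n in atTop, f n / h n ∈ Set.Ioo (L/2) (2*L) :=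
    hf (Ioo_mem_nhds (by linarith) (by linarith))
  obtain ⟨N, hN⟩ := eventually_atTop.mp (h1.and hh)
  refine ⟨L/2, 2*L, by linarith, by linarith, N, fun n hn => ?_⟩
  obtain ⟨⟨hlo, hhi⟩, hpos⟩ := hN n hn
  exact ⟨(le_div_iff₀ hpos).mp hlo.le, (div_le_iff₀ hpos).mp hhi.le⟩

lemma lim_base (c : ℝ) (hc : c < 0) :
    Tendsto (fun n : ℕ => ((1:ℝ) + n) ^ c) atTop (nhds 0) := by
  have h1 : Tendsto (fun n : ℕ => (1:ℝ) + n) atTop atTop :=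
    tendsto_atTop_add_const_left _ 1 tendsto_natCast_atTop_atTop
  have := (tendsto_rpow_neg_atTop (by linarith : (0:ℝ) < -c)).comp h1
  simpa [Function.comp_def] using this

lemma lim_inv (c : ℝ) (hc : 0 < c) :
    Tendsto (fun n : ℕ => ((n:ℝ)) ^ (-c)) atTop (nhds 0) :=
  (tendsto_rpow_neg_atTop hc).comp tendsto_natCast_atTop_atTop

lemma lim_ratio_base : Tendsto (fun n : ℕ => ((1:ℝ) + n) / n) atTop (nhds 1) := by
  have h0 : Tendsto (fun n : ℕ => (1:ℝ)/n + 1) atTop (nhds 1) := by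
    simpa using (tendsto_one_div_atTop_nhds_zero_nat (𝕜 := ℝ)).add_const 1
  apply h0.congr'
  filter_upwards [eventually_ge_atTop 1] with n hn
  have hn' : (n:ℝ) ≠ 0 := by positivity
  field_simp

lemma lim_ratio (c : ℝ) : Tendsto (fun n : ℕ => (((1:ℝ) + n) / n) ^ c) atTop (nhds 1) := by
  have hc : ContinuousAt (fun x : ℝ => x ^ c) 1 :=
    Real.continuousAt_rpow_const 1 c (Or.inl one_ne_zero)
  have := hc.tendsto.comp lim_ratio_base
  simpa [Function.comp_def] using this

lemma lim_log : Tendsto (fun n : ℕ => Real.log (1 + n) / Real.log n) atTop (nhds 1) := by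
  have hlogtop : Tendsto (fun n : ℕ => Real.log n) atTop atTop :=
    Real.tendsto_log_atTop.comp tendsto_natCast_atTop_atTop
  have hdiff : Tendsto (fun n : ℕ => Real.log (1 + n) - Real.log n) atTop (nhds 0) := by
    have hcont : ContinuousAt Real.log 1 := Real.continuousAt_log one_ne_zero
    have h2 := hcont.tendsto.comp lim_ratio_base
    rw [Real.log_one] at h2
    apply h2.congr'
    filter_upwards [eventually_ge_atTop 1] with n hn
    have hn' : (0:ℝ) < n := by exact_mod_cast hn
    simp only [Function.comp_apply]
    rw [Real.log_div (by positivity) (by positivity)]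
  have h3 := (hdiff.div_atTop hlogtop).add_const 1
  rw [zero_add] at h3
  apply h3.congr'
  filter_upwards [eventually_ge_atTop 2] with n hn
  have hn' : (1:ℝ) < n := by exact_mod_cast hn
  have hl : Real.log n ≠ 0 := (Real.log_pos hn').ne'
  field_simp
  ring

/-- Limit of `J α n` for `α > 1`. -/
lemma tend_J (α : ℝ) (hα : 1 < α) :
    Tendsto (fun n : ℕ => J α n) atTop (nhds (π / (α - 1))) := by
  have hne : α ≠ 1 := hα.ne'
  have hd : 1 - α < 0 := by linarith
  have h := (((lim_base (1 - α) hd).sub_const 1).const_mul π).div_const (1 - α)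
  have hval : π * (0 - 1) / (1 - α) = π / (α - 1) := by
    rw [div_eq_div_iff (by linarith) (by linarith)]
    ring
  rw [hval] at h
  exact h.congr (fun n => (J_ne α hne n).symm)

/-- Limit of `J α n / n^(1-α)` for `α < 1`. -/
lemma tend_Jdiv (α : ℝ) (hα : α < 1) :
    Tendsto (fun n : ℕ => J α n / (n:ℝ) ^ (1 - α)) atTop (nhds (π / (1 - α))) := by
  have hc : (0:ℝ) < 1 - α := by linarith
  have h := (((lim_ratio (1 - α)).sub (lim_inv (1 - α) hc)).const_mul π).div_const (1 - α)
  rw [show π * (1 - 0) / (1 - α) = π / (1 - α) by ring] at h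
  apply h.congr'
  filter_upwards [eventually_ge_atTop 1] with n hn
  have hm : (0:ℝ) < n := by exact_mod_cast hn
  have hmc : (0:ℝ) < (n:ℝ) ^ (1 - α) := Real.rpow_pos_of_pos hm _
  rw [J_ne α hα.ne n, Real.div_rpow (by positivity) hm.le, Real.rpow_neg hm.le]
  field_simp

theorem sqrt_density_integral_order (β : ℝ) (hβ : 0 ≤ β) :
    IsBigTheta (fun n => ∫ x in diskB n, Real.sqrt (Phi β n * (1 + ‖x‖ ^ 2) ^ (-β)))
      (fun n => g β n) := by
  have hfe : (fun n : ℕ => ∫ x in diskB n, Real.sqrt (Phi β n * (1 + ‖x‖ ^ 2) ^ (-β)))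
      = fun n : ℕ => (Real.sqrt (J β n))⁻¹ * J (β / 2) n := funext (Feq β)
  rw [hfe]
  rcases lt_trichotomy 2 β with h2 | h2 | h2
  · -- β > 2
    have hgg : ∀ n : ℕ, g β n = 1 := fun n => by simp [g, h2]
    have hB : Tendsto (fun n : ℕ => J β n) atTop (nhds (π / (β - 1))) :=
      tend_J β (by linarith)
    have hA : Tendsto (fun n : ℕ => J (β / 2) n) atTop (nhds (π / (β / 2 - 1))) :=
      tend_J (β / 2) (by linarith)
    have hBpos : (0:ℝ) < π / (β - 1) := by
      have h' : (0:ℝ) < β - 1 := by linarith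
      have := Real.pi_pos; positivity
    have hApos : (0:ℝ) < π / (β / 2 - 1) := by
      have h' : (0:ℝ) < β / 2 - 1 := by linarith
      have := Real.pi_pos; positivity
    have hsB : Tendsto (fun n : ℕ => Real.sqrt (J β n)) atTop
        (nhds (Real.sqrt (π / (β - 1)))) :=
      (Real.continuous_sqrt.continuousAt.tendsto).comp hB
    have hsBne : Real.sqrt (π / (β - 1)) ≠ 0 := (Real.sqrt_pos.mpr hBpos).ne'
    have hF : Tendsto (fun n : ℕ => (Real.sqrt (J β n))⁻¹ * J (β / 2) n) atTop
        (nhds ((Real.sqrt (π / (β - 1)))⁻¹ * (π / (β / 2 - 1)))) :=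
      (hsB.inv₀ hsBne).mul hA
    apply theta_of_tendsto (L := (Real.sqrt (π / (β - 1)))⁻¹ * (π / (β / 2 - 1)))
    · have : 0 < Real.sqrt (π / (β - 1)) := Real.sqrt_pos.mpr hBpos
      positivity
    · apply hF.congr
      intro n
      rw [hgg n, div_one]
    · filter_upwards with n
      rw [hgg n]; norm_num
  · -- β = 2
    subst h2
    have hB : Tendsto (fun n : ℕ => J 2 n) atTop (nhds (π / (2 - 1))) := tend_J 2 (by norm_num)
    rw [show ((2:ℝ) - 1) = 1 by norm_num, div_one] at hB
    have hsB : Tendsto (fun n : ℕ => Real.sqrt (J 2 n)) atTop (nhds (Real.sqrt π)) :=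
      (Real.continuous_sqrt.continuousAt.tendsto).comp hB
    have hsBne : Real.sqrt π ≠ 0 := (Real.sqrt_pos.mpr Real.pi_pos).ne'
    have hf0 : Tendsto (fun n : ℕ =>
        (Real.sqrt (J 2 n))⁻¹ * (π * (Real.log (1 + (n:ℝ)) / Real.log n)))
        atTop (nhds ((Real.sqrt π)⁻¹ * (π * 1))) := (hsB.inv₀ hsBne).mul (lim_log.const_mul π)
    apply theta_of_tendsto (L := (Real.sqrt π)⁻¹ * (π * 1))
    · have : 0 < Real.sqrt π := Real.sqrt_pos.mpr Real.pi_pos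
      have := Real.pi_pos
      positivity
    · apply hf0.congr
      intro n
      rw [show (2:ℝ)/2 = 1 by norm_num, J_one n]
      have hg2 : g 2 n = Real.log n := by simp [g]
      rw [hg2, mul_div_assoc, mul_div_assoc]
    · filter_upwards [eventually_ge_atTop 2] with n hn
      have h1n : (1:ℝ) < n := by exact_mod_cast hn
      have hg2 : g 2 n = Real.log n := by simp [g]
      rw [hg2]
      exact Real.log_pos h1n
  · rcases lt_trichotomy 1 β with h1 | h1 | h1
    · -- 1 < β < 2
      have hgg : ∀ n : ℕ, g β n = (n:ℝ) ^ (1 - β / 2) := by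
        intro n
        rw [g, if_neg (by linarith), if_neg (by linarith), if_pos h1]
      have hB : Tendsto (fun n : ℕ => J β n) atTop (nhds (π / (β - 1))) := tend_J β h1
      have hBpos : (0:ℝ) < π / (β - 1) := by
        have h' : (0:ℝ) < β - 1 := by linarith
        have := Real.pi_pos; positivity
      have hsB : Tendsto (fun n : ℕ => Real.sqrt (J β n)) atTop
          (nhds (Real.sqrt (π / (β - 1)))) :=
        (Real.continuous_sqrt.continuousAt.tendsto).comp hB
      have hsBne : Real.sqrt (π / (β - 1)) ≠ 0 := (Real.sqrt_pos.mpr hBpos).ne'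
      have hA : Tendsto (fun n : ℕ => J (β / 2) n / (n:ℝ) ^ (1 - β / 2)) atTop
          (nhds (π / (1 - β / 2))) := tend_Jdiv (β / 2) (by linarith)
      have hf0 : Tendsto (fun n : ℕ =>
          (Real.sqrt (J β n))⁻¹ * (J (β / 2) n / (n:ℝ) ^ (1 - β / 2))) atTop
          (nhds ((Real.sqrt (π / (β - 1)))⁻¹ * (π / (1 - β / 2)))) :=
        (hsB.inv₀ hsBne).mul hA
      apply theta_of_tendsto (L := (Real.sqrt (π / (β - 1)))⁻¹ * (π / (1 - β / 2)))
      · have hs : 0 < Real.sqrt (π / (β - 1)) := Real.sqrt_pos.mpr hBpos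
        have hc : (0:ℝ) < 1 - β / 2 := by linarith
        have := Real.pi_pos
        positivity
      · apply hf0.congr
        intro n
        rw [hgg n, mul_div_assoc]
      · filter_upwards [eventually_ge_atTop 1] with n hn
        have hm : (0:ℝ) < n := by exact_mod_cast hn
        rw [hgg n]
        positivity
    · -- β = 1
      subst h1
      have hgg : ∀ n : ℕ, g 1 n = Real.sqrt ((n:ℝ) / Real.log n) := by
        intro n
        rw [g, if_neg (by norm_num), if_neg (by norm_num), if_neg (by norm_num), if_pos rfl]
      have hfirst : Tendsto (fun n : ℕ =>
          2 * π * ((((1:ℝ) + n) / n) ^ ((1:ℝ) / 2) - (n:ℝ) ^ (-((1:ℝ) / 2)))) atTop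
          (nhds (2 * π * (1 - 0))) :=
        ((lim_ratio ((1:ℝ) / 2)).sub (lim_inv ((1:ℝ) / 2) (by norm_num))).const_mul (2 * π)
      have hlog : Tendsto (fun n : ℕ => Real.sqrt (π * (Real.log (1 + (n:ℝ)) / Real.log n)))
          atTop (nhds (Real.sqrt (π * 1))) :=
        (Real.continuous_sqrt.continuousAt.tendsto).comp (lim_log.const_mul π)
      have hlne : Real.sqrt (π * 1) ≠ 0 := by
        rw [mul_one]; exact (Real.sqrt_pos.mpr Real.pi_pos).ne'
      have hf0 : Tendsto (fun n : ℕ =>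
          (2 * π * ((((1:ℝ) + n) / n) ^ ((1:ℝ) / 2) - (n:ℝ) ^ (-((1:ℝ) / 2)))) *
            (Real.sqrt (π * (Real.log (1 + (n:ℝ)) / Real.log n)))⁻¹) atTop
          (nhds ((2 * π * (1 - 0)) * (Real.sqrt (π * 1))⁻¹)) :=
        hfirst.mul (hlog.inv₀ hlne)
      apply theta_of_tendsto (L := (2 * π * (1 - 0)) * (Real.sqrt (π * 1))⁻¹)
      · have hs : 0 < Real.sqrt (π * 1) := by
          rw [mul_one]; exact Real.sqrt_pos.mpr Real.pi_pos
        have := Real.pi_pos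
        positivity
      · apply hf0.congr'
        filter_upwards [eventually_ge_atTop 2] with n hn
        have hm1 : (1:ℝ) < n := by exact_mod_cast hn
        have hm : (0:ℝ) < n := by linarith
        have hlm : (0:ℝ) < Real.log n := Real.log_pos hm1
        have hl1 : (0:ℝ) < Real.log (1 + (n:ℝ)) := Real.log_pos (by linarith)
        rw [hgg n, J_one n, J_ne (1/2) (by norm_num) n]
        rw [show (1:ℝ) - 1/2 = (1:ℝ)/2 by norm_num, show (1:ℝ)/2 = (2:ℝ)⁻¹ by norm_num]
        rw [Real.sqrt_div hm.le, Real.sqrt_mul Real.pi_nonneg,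
          Real.sqrt_mul Real.pi_nonneg, Real.sqrt_div hl1.le,
          Real.div_rpow (by positivity : (0:ℝ) ≤ 1 + (n:ℝ)) hm.le,
          Real.rpow_neg hm.le, Real.sqrt_eq_rpow, show (1:ℝ)/2 = (2:ℝ)⁻¹ by norm_num]
        have h5 : Real.sqrt π ≠ 0 := (Real.sqrt_pos.mpr Real.pi_pos).ne'
        have h6 : ((n:ℝ)) ^ ((2:ℝ)⁻¹) ≠ 0 := by positivity
        have h7 : Real.sqrt (Real.log n) ≠ 0 := (Real.sqrt_pos.mpr hlm).ne'
        have h8 : Real.sqrt (Real.log (1 + (n:ℝ))) ≠ 0 := (Real.sqrt_pos.mpr hl1).ne'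
        field_simp
        rw [Real.sqrt_eq_rpow (n:ℝ)]
        ring
      · filter_upwards [eventually_ge_atTop 2] with n hn
        have hm1 : (1:ℝ) < n := by exact_mod_cast hn
        have hlm : (0:ℝ) < Real.log n := Real.log_pos hm1
        rw [hgg n]
        have : (0:ℝ) < (n:ℝ) / Real.log n := by positivity
        exact Real.sqrt_pos.mpr this
    · -- 0 ≤ β < 1
      have hgg : ∀ n : ℕ, g β n = Real.sqrt n := by
        intro n
        rw [g, if_neg (by linarith), if_neg (by rintro rfl; linarith),
          if_neg (by linarith), if_neg (by rintro rfl; linarith)]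
      have hA : Tendsto (fun n : ℕ => J (β / 2) n / (n:ℝ) ^ (1 - β / 2)) atTop
          (nhds (π / (1 - β / 2))) := tend_Jdiv (β / 2) (by linarith)
      have hBd : Tendsto (fun n : ℕ => J β n / (n:ℝ) ^ (1 - β)) atTop
          (nhds (π / (1 - β))) := tend_Jdiv β h1
      have hBpos : (0:ℝ) < π / (1 - β) := by
        have h' : (0:ℝ) < 1 - β := by linarith
        have := Real.pi_pos; positivity
      have hsB : Tendsto (fun n : ℕ => Real.sqrt (J β n / (n:ℝ) ^ (1 - β))) atTop
          (nhds (Real.sqrt (π / (1 - β)))) :=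
        (Real.continuous_sqrt.continuousAt.tendsto).comp hBd
      have hsBne : Real.sqrt (π / (1 - β)) ≠ 0 := (Real.sqrt_pos.mpr hBpos).ne'
      have hf0 : Tendsto (fun n : ℕ =>
          (J (β / 2) n / (n:ℝ) ^ (1 - β / 2)) * (Real.sqrt (J β n / (n:ℝ) ^ (1 - β)))⁻¹)
          atTop (nhds ((π / (1 - β / 2)) * (Real.sqrt (π / (1 - β)))⁻¹)) :=
        hA.mul (hsB.inv₀ hsBne)
      apply theta_of_tendsto (L := (π / (1 - β / 2)) * (Real.sqrt (π / (1 - β)))⁻¹)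
      · have hs : 0 < Real.sqrt (π / (1 - β)) := Real.sqrt_pos.mpr hBpos
        have hc : (0:ℝ) < 1 - β / 2 := by linarith
        have := Real.pi_pos
        positivity
      · apply hf0.congr'
        filter_upwards [eventually_ge_atTop 1] with n hn
        have hm : (0:ℝ) < n := by exact_mod_cast hn
        have hJB : 0 < J β n := J_pos β n hn
        rw [hgg n, Real.sqrt_div (J_nonneg β n)]
        have e2 : Real.sqrt ((n:ℝ) ^ (1 - β)) = (n:ℝ) ^ ((1 - β) / 2) := by
          rw [Real.sqrt_eq_rpow, ← Real.rpow_mul hm.le]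
          congr 1; ring
        have e3 : Real.sqrt (n:ℝ) = (n:ℝ) ^ ((1:ℝ) / 2) := Real.sqrt_eq_rpow _
        have e4 : ((n:ℝ)) ^ (1 - β / 2) = (n:ℝ) ^ ((1:ℝ) / 2) * (n:ℝ) ^ ((1 - β) / 2) := by
          rw [← Real.rpow_add hm]; congr 1; ring
        rw [e2, e3, e4]
        have h5 : Real.sqrt (J β n) ≠ 0 := (Real.sqrt_pos.mpr hJB).ne'
        have h6 : ((n:ℝ)) ^ ((1:ℝ) / 2) ≠ 0 := by positivity
        have h7 : ((n:ℝ)) ^ ((1 - β) / 2) ≠ 0 := by positivity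
        field_simp
      · filter_upwards [eventually_ge_atTop 1] with n hn
        have hm : (0:ℝ) < n := by exact_mod_cast hn
        rw [hgg n]
        positivity
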